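/- (Carleson) Let E₁, E₂ ⊆ ℝ be compact sets and suppose the one-dimensional Lebesgue measure of E₂ is positive. Let E := { x + y·i : x ∈ E₁, y ∈ E₂ } ⊆ ℂ. Then E is A-removable if and only if E₁ is countable. -/

import Mathlib

open MeasureTheory Filter

/-- A compact set `E ⊆ ℂ` is `A`-removable if every continuous function `f : ℂ → ℂ` that is
holomorphic on `ℂ \ E` and has a finite limit at infinity is constant. -/
def ARemovable (E : Set ℂ) : Prop :=
  ∀ f : ℂ → ℂ, Continuous f → DifferentiableOn ℂ f Eᶜ →
    (∃ L : ℂ, Tendsto f (cocompact ℂ) (nhds L)) → ∀ z w : ℂ, f z = f w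

section PartA

open Complex Set Metric intervalIntegral
open scoped Interval

private lemma reProdIm_mono {s s' t t' : Set ℝ} (hs : s ⊆ s') (ht : t ⊆ t') :
    s ×ℂ t ⊆ s' ×ℂ t' :=
  Set.inter_subset_inter (Set.preimage_mono hs) (Set.preimage_mono ht)

private lemma Ioo_subset_uIcc' {a b : ℝ} : Set.Ioo (min a b) (max a b) ⊆ Set.uIcc a b := by
  rw [Set.uIcc]; exact Set.Ioo_subset_Icc_self

/-- Cauchy-Goursat for a rectangle, allowing non-differentiability on a vertical line. -/
private lemma rect_zero {f : ℂ → ℂ} {S : Set ℂ} (hS : IsOpen S) {x₀ : ℝ}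
    (hc : ContinuousOn f S) (hd : ∀ z ∈ S, z.re ≠ x₀ → DifferentiableAt ℂ f z)
    (p q : ℂ) (hpq : [[p.re, q.re]] ×ℂ [[p.im, q.im]] ⊆ S) :
    (∫ x : ℝ in p.re..q.re, f (x + p.im * I)) - (∫ x : ℝ in p.re..q.re, f (x + q.im * I)) +
        I • (∫ y : ℝ in p.im..q.im, f (q.re + y * I)) -
        I • (∫ y : ℝ in p.im..q.im, f (p.re + y * I)) = 0 := by
  have hmem : ∀ {u v : ℝ}, u ∈ [[p.re, q.re]] → v ∈ [[p.im, q.im]] → (u + v * I : ℂ) ∈ S :=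
    fun hu hv => hpq (by rw [Complex.mem_reProdIm]; constructor <;> simpa)
  have hcont_h : ∀ {v : ℝ}, v ∈ [[p.im, q.im]] →
      ContinuousOn (fun x : ℝ => f (x + v * I)) [[p.re, q.re]] := by
    intro v hv
    exact hc.comp (Continuous.continuousOn (by fun_prop)) (fun u hu => hmem hu hv)
  have main : ∀ u v : ℂ, u.re ∈ [[p.re, q.re]] → v.re ∈ [[p.re, q.re]] →
      u.im ∈ [[p.im, q.im]] → v.im ∈ [[p.im, q.im]] →
      (∀ t ∈ Set.Ioo (min u.re v.re) (max u.re v.re), t ≠ x₀) →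
      (∫ x : ℝ in u.re..v.re, f (x + u.im * I)) - (∫ x : ℝ in u.re..v.re, f (x + v.im * I)) +
        I • (∫ y : ℝ in u.im..v.im, f (v.re + y * I)) -
        I • (∫ y : ℝ in u.im..v.im, f (u.re + y * I)) = 0 := by
    intro u v hu hv hui hvi hne
    refine Complex.integral_boundary_rect_eq_zero_of_differentiable_on_off_countable f u v ∅
      Set.countable_empty (hc.mono ((reProdIm_mono (Set.uIcc_subset_uIcc hu hv)
        (Set.uIcc_subset_uIcc hui hvi)).trans hpq)) ?_
    intro z hz
    obtain ⟨hz, -⟩ := hz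
    rw [Complex.mem_reProdIm] at hz
    refine hd z (hpq (by
      rw [Complex.mem_reProdIm]
      exact ⟨Set.uIcc_subset_uIcc hu hv (Ioo_subset_uIcc' hz.1),
             Set.uIcc_subset_uIcc hui hvi (Ioo_subset_uIcc' hz.2)⟩)) (hne _ hz.1)
  by_cases hx : x₀ ∈ [[p.re, q.re]]
  · have hsub1 : [[p.re, x₀]] ⊆ [[p.re, q.re]] := Set.uIcc_subset_uIcc Set.left_mem_uIcc hx
    have hsub2 : [[x₀, q.re]] ⊆ [[p.re, q.re]] := Set.uIcc_subset_uIcc hx Set.right_mem_uIcc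
    have h1 : (∫ x : ℝ in p.re..x₀, f (x + p.im * I)) - (∫ x : ℝ in p.re..x₀, f (x + q.im * I)) +
        I • (∫ y : ℝ in p.im..q.im, f (x₀ + y * I)) -
        I • (∫ y : ℝ in p.im..q.im, f (p.re + y * I)) = 0 :=
      main p ⟨x₀, q.im⟩ Set.left_mem_uIcc hx Set.left_mem_uIcc Set.right_mem_uIcc
        (fun t ht h => by
          subst h
          rcases min_lt_iff.1 ht.1 with h1 | h1 <;> rcases lt_max_iff.1 ht.2 with h2 | h2 <;>
            linarith)
    have h2 : (∫ x : ℝ in x₀..q.re, f (x + p.im * I)) - (∫ x : ℝ in x₀..q.re, f (x + q.im * I)) +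
        I • (∫ y : ℝ in p.im..q.im, f (q.re + y * I)) -
        I • (∫ y : ℝ in p.im..q.im, f (x₀ + y * I)) = 0 :=
      main ⟨x₀, p.im⟩ q hx Set.right_mem_uIcc Set.left_mem_uIcc Set.right_mem_uIcc
        (fun t ht h => by
          subst h
          rcases min_lt_iff.1 ht.1 with h1 | h1 <;> rcases lt_max_iff.1 ht.2 with h2 | h2 <;>
            linarith)
    have i1 : IntervalIntegrable (fun x : ℝ => f (x + p.im * I)) volume p.re x₀ :=
      ((hcont_h Set.left_mem_uIcc).mono hsub1).intervalIntegrable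
    have i2 : IntervalIntegrable (fun x : ℝ => f (x + p.im * I)) volume x₀ q.re :=
      ((hcont_h Set.left_mem_uIcc).mono hsub2).intervalIntegrable
    have i3 : IntervalIntegrable (fun x : ℝ => f (x + q.im * I)) volume p.re x₀ :=
      ((hcont_h Set.right_mem_uIcc).mono hsub1).intervalIntegrable
    have i4 : IntervalIntegrable (fun x : ℝ => f (x + q.im * I)) volume x₀ q.re :=
      ((hcont_h Set.right_mem_uIcc).mono hsub2).intervalIntegrable
    have s1 := intervalIntegral.integral_add_adjacent_intervals i1 i2
    have s2 := intervalIntegral.integral_add_adjacent_intervals i3 i4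
    simp only [smul_eq_mul] at h1 h2 ⊢
    linear_combination h1 + h2 - s1 + s2
  · refine main p q Set.left_mem_uIcc Set.right_mem_uIcc Set.left_mem_uIcc Set.right_mem_uIcc ?_
    exact fun t ht h => hx (h ▸ Ioo_subset_uIcc' ht)


/-- Morera-type removability of a vertical line inside an open box. -/
private lemma analytic_off_line {f : ℂ → ℂ} {a b c d x₀ : ℝ}
    (hc : ContinuousOn f (Set.Ioo a b ×ℂ Set.Ioo c d))
    (hd : ∀ z ∈ Set.Ioo a b ×ℂ Set.Ioo c d, z.re ≠ x₀ → DifferentiableAt ℂ f z)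
    {z₀ : ℂ} (hz₀ : z₀ ∈ Set.Ioo a b ×ℂ Set.Ioo c d) : AnalyticAt ℂ f z₀ := by
  set S := Set.Ioo a b ×ℂ Set.Ioo c d with hSdef
  have hS : IsOpen S := isOpen_Ioo.reProdIm isOpen_Ioo
  have hsub : ∀ {u₁ u₂ v₁ v₂ : ℝ}, u₁ ∈ Set.Ioo a b → u₂ ∈ Set.Ioo a b → v₁ ∈ Set.Ioo c d →
      v₂ ∈ Set.Ioo c d → [[u₁, u₂]] ×ℂ [[v₁, v₂]] ⊆ S :=
    fun h1 h2 h3 h4 => reProdIm_mono (Set.ordConnected_Ioo.uIcc_subset h1 h2)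
      (Set.ordConnected_Ioo.uIcc_subset h3 h4)
  have hseg_h : ∀ {u₁ u₂ v : ℝ}, u₁ ∈ Set.Ioo a b → u₂ ∈ Set.Ioo a b → v ∈ Set.Ioo c d →
      IntervalIntegrable (fun x : ℝ => f (x + v * I)) volume u₁ u₂ := by
    intro u₁ u₂ v h1 h2 h3
    apply ContinuousOn.intervalIntegrable
    apply hc.comp (Continuous.continuousOn (by fun_prop))
    intro t ht
    exact hsub h1 h2 h3 h3 (by rw [Complex.mem_reProdIm]; constructor <;> simp [ht])
  have hseg_v : ∀ {u v₁ v₂ : ℝ}, u ∈ Set.Ioo a b → v₁ ∈ Set.Ioo c d → v₂ ∈ Set.Ioo c d →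
      IntervalIntegrable (fun y : ℝ => f (u + y * I)) volume v₁ v₂ := by
    intro u v₁ v₂ h1 h2 h3
    apply ContinuousOn.intervalIntegrable
    apply hc.comp (Continuous.continuousOn (by fun_prop))
    intro t ht
    exact hsub h1 h1 h2 h3 (by rw [Complex.mem_reProdIm]; constructor <;> simp [ht])
  set F : ℂ → ℂ := fun z => (∫ x : ℝ in z₀.re..z.re, f (x + z₀.im * I)) +
      I * ∫ y : ℝ in z₀.im..z.im, f (z.re + y * I) with hF
  have hz₀' := hz₀
  rw [Complex.mem_reProdIm] at hz₀'
  have key : ∀ ζ ∈ S, ∀ z ∈ S, F z - F ζ =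
      (∫ x : ℝ in ζ.re..z.re, f (x + ζ.im * I)) +
        I * ∫ y : ℝ in ζ.im..z.im, f (z.re + y * I) := by
    intro ζ hζ z hz
    rw [Complex.mem_reProdIm] at hζ hz
    have R : (∫ x : ℝ in ζ.re..z.re, f (x + z₀.im * I)) -
        (∫ x : ℝ in ζ.re..z.re, f (x + ζ.im * I)) +
        I • (∫ y : ℝ in z₀.im..ζ.im, f (z.re + y * I)) -
        I • (∫ y : ℝ in z₀.im..ζ.im, f (ζ.re + y * I)) = 0 :=
      rect_zero hS hc hd (⟨ζ.re, z₀.im⟩ : ℂ) (⟨z.re, ζ.im⟩ : ℂ)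
        (hsub hζ.1 hz.1 hz₀'.2 hζ.2)
    have s1 := intervalIntegral.integral_add_adjacent_intervals
      (hseg_h hz₀'.1 hζ.1 hz₀'.2) (hseg_h hζ.1 hz.1 hz₀'.2)
    have s2 := intervalIntegral.integral_add_adjacent_intervals
      (hseg_v hz.1 hz₀'.2 hζ.2) (hseg_v hz.1 hζ.2 hz.2)
    simp only [smul_eq_mul] at R
    simp only [hF]
    linear_combination R - s1 - I * s2
  have keyD : ∀ ζ ∈ S, HasDerivAt F (f ζ) ζ := by
    intro ζ hζ
    have hζ' := hζ
    rw [Complex.mem_reProdIm] at hζ'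
    rw [hasDerivAt_iff_isLittleO, Asymptotics.isLittleO_iff]
    intro ε hε
    obtain ⟨δ₂, hδ₂, hball⟩ := Metric.isOpen_iff.1 hS ζ hζ
    obtain ⟨δ₁, hδ₁, hcont⟩ := Metric.continuousAt_iff.1
      (hc.continuousAt (hS.mem_nhds hζ)) (ε / 2) (by linarith)
    set δ := min δ₁ δ₂ / 2 with hδdef
    have hδ : 0 < δ := by positivity
    have habs : ∀ u v w : ℝ, w ∈ Set.uIoc u v → |w - u| ≤ |v - u| := by
      intro u v w hw
      rcases Set.mem_uIoc.mp hw with ⟨h1, h2⟩ | ⟨h1, h2⟩ <;>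
        (rw [abs_le]; constructor <;>
          nlinarith [le_abs_self (v - u), neg_abs_le (v - u), abs_nonneg (v - u)])
    filter_upwards [Metric.ball_mem_nhds ζ hδ] with z hzball
    have hzd : dist z ζ < δ := hzball
    have hzS : z ∈ S := hball (lt_of_lt_of_le hzd (by
      have : min δ₁ δ₂ ≤ δ₂ := min_le_right _ _
      rw [hδdef]; linarith))
    have hz' := hzS
    rw [Complex.mem_reProdIm] at hz'
    have hre_le : |z.re - ζ.re| ≤ dist z ζ := by
      rw [Complex.dist_eq]
      simpa [Complex.sub_re] using Complex.abs_re_le_norm (z - ζ)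
    have him_le : |z.im - ζ.im| ≤ dist z ζ := by
      rw [Complex.dist_eq]
      simpa [Complex.sub_im] using Complex.abs_im_le_norm (z - ζ)
    have hδδ₁ : 2 * δ ≤ δ₁ := by
      have : min δ₁ δ₂ ≤ δ₁ := min_le_left _ _
      rw [hδdef]; linarith
    -- the two integral expansions
    have e1 : (∫ x : ℝ in ζ.re..z.re, (f (x + ζ.im * I) - f ζ)) =
        (∫ x : ℝ in ζ.re..z.re, f (x + ζ.im * I)) - (z.re - ζ.re) • f ζ := by
      rw [intervalIntegral.integral_sub (hseg_h hζ'.1 hz'.1 hζ'.2)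
        intervalIntegrable_const, intervalIntegral.integral_const]
    have e2 : (∫ y : ℝ in ζ.im..z.im, (f (z.re + y * I) - f ζ)) =
        (∫ y : ℝ in ζ.im..z.im, f (z.re + y * I)) - (z.im - ζ.im) • f ζ := by
      rw [intervalIntegral.integral_sub (hseg_v hz'.1 hζ'.2 hz'.2)
        intervalIntegrable_const, intervalIntegral.integral_const]
    have hzdec : ((z.re - ζ.re : ℝ) : ℂ) + ((z.im - ζ.im : ℝ) : ℂ) * I = z - ζ := by
      simp [Complex.ext_iff]
    have hkey := key ζ hζ z hzS
    have main_eq : F z - F ζ - (z - ζ) • f ζ =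
        (∫ x : ℝ in ζ.re..z.re, (f (x + ζ.im * I) - f ζ)) +
          I * (∫ y : ℝ in ζ.im..z.im, (f (z.re + y * I) - f ζ)) := by
      simp only [smul_eq_mul, Complex.real_smul] at e1 e2 ⊢
      linear_combination hkey - e1 - I * e2 + f ζ * hzdec
    -- norm bounds
    have n1 : ‖∫ x : ℝ in ζ.re..z.re, (f (x + ζ.im * I) - f ζ)‖ ≤ (ε / 2) * |z.re - ζ.re| := by
      apply intervalIntegral.norm_integral_le_of_norm_le_const
      intro x hx
      have hd1 : dist ((x : ℂ) + ζ.im * I) ζ < δ₁ := by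
        have : ((x : ℂ) + ζ.im * I) - ζ = ((x - ζ.re : ℝ) : ℂ) := by simp [Complex.ext_iff]
        rw [Complex.dist_eq, this, Complex.norm_real, Real.norm_eq_abs]
        calc |x - ζ.re| ≤ |z.re - ζ.re| := habs _ _ _ hx
          _ ≤ dist z ζ := hre_le
          _ < δ := hzd
          _ ≤ δ₁ := by linarith
      have := hcont hd1
      rw [dist_eq_norm] at this
      linarith
    have n2 : ‖∫ y : ℝ in ζ.im..z.im, (f (z.re + y * I) - f ζ)‖ ≤ (ε / 2) * |z.im - ζ.im| := by
      apply intervalIntegral.norm_integral_le_of_norm_le_const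
      intro y hy
      have hd1 : dist ((z.re : ℂ) + y * I) ζ < δ₁ := by
        have heq : ((z.re : ℂ) + y * I) - ζ = ((z.re - ζ.re : ℝ) : ℂ) + ((y - ζ.im : ℝ) : ℂ) * I := by
          simp [Complex.ext_iff]
        rw [Complex.dist_eq, heq]
        calc ‖((z.re - ζ.re : ℝ) : ℂ) + ((y - ζ.im : ℝ) : ℂ) * I‖
            ≤ |z.re - ζ.re| + |y - ζ.im| := by
              simpa using Complex.norm_le_abs_re_add_abs_im
                (((z.re - ζ.re : ℝ) : ℂ) + ((y - ζ.im : ℝ) : ℂ) * I)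
          _ ≤ |z.re - ζ.re| + |z.im - ζ.im| := by
              have := habs ζ.im z.im y hy; linarith
          _ < 2 * δ := by
              have h1 := hre_le; have h2 := him_le; linarith
          _ ≤ δ₁ := hδδ₁
      have := hcont hd1
      rw [dist_eq_norm] at this
      linarith
    rw [main_eq]
    calc ‖(∫ x : ℝ in ζ.re..z.re, (f (x + ζ.im * I) - f ζ)) +
          I * (∫ y : ℝ in ζ.im..z.im, (f (z.re + y * I) - f ζ))‖
        ≤ ‖∫ x : ℝ in ζ.re..z.re, (f (x + ζ.im * I) - f ζ)‖ +
          ‖I * (∫ y : ℝ in ζ.im..z.im, (f (z.re + y * I) - f ζ))‖ := norm_add_le _ _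
      _ = ‖∫ x : ℝ in ζ.re..z.re, (f (x + ζ.im * I) - f ζ)‖ +
          ‖∫ y : ℝ in ζ.im..z.im, (f (z.re + y * I) - f ζ)‖ := by
            rw [norm_mul, Complex.norm_I, one_mul]
      _ ≤ (ε / 2) * |z.re - ζ.re| + (ε / 2) * |z.im - ζ.im| := by linarith
      _ ≤ ε * ‖z - ζ‖ := by
          have h1 : |z.re - ζ.re| ≤ ‖z - ζ‖ := by rw [← dist_eq_norm]; exact hre_le
          have h2 : |z.im - ζ.im| ≤ ‖z - ζ‖ := by rw [← dist_eq_norm]; exact him_le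
          nlinarith [norm_nonneg (z - ζ)]
  -- conclude
  have hFdiff : DifferentiableOn ℂ F S := fun ζ hζ =>
    (keyD ζ hζ).differentiableAt.differentiableWithinAt
  have hFa : AnalyticOnNhd ℂ F S := hFdiff.analyticOnNhd hS
  have hFd : AnalyticOnNhd ℂ (deriv F) S := hFa.deriv
  exact (hFd z₀ hz₀).congr (Filter.eventuallyEq_of_mem (hS.mem_nhds hz₀)
    (fun z hz => (keyD z hz).deriv))


private lemma removable_of_countable {E₁ E₂ : Set ℝ} (h₁ : IsClosed E₁) (h₂ : IsClosed E₂)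
    (hcnt : E₁.Countable) : ARemovable {z : ℂ | z.re ∈ E₁ ∧ z.im ∈ E₂} := by
  intro f hf hd hL
  obtain ⟨L, hL⟩ := hL
  have hEc : IsClosed {z : ℂ | z.re ∈ E₁ ∧ z.im ∈ E₂} :=
    IsClosed.inter (h₁.preimage Complex.continuous_re) (h₂.preimage Complex.continuous_im)
  have hA : ∀ z : ℂ, AnalyticAt ℂ f z := by
    by_contra hC
    push_neg at hC
    set C : Set ℂ := {z : ℂ | ¬AnalyticAt ℂ f z} with hCdef
    have hCne : C.Nonempty := hC
    have hCclosed : IsClosed C := (isOpen_analyticAt ℂ f).isClosed_compl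
    have hCE : C ⊆ {z : ℂ | z.re ∈ E₁ ∧ z.im ∈ E₂} := by
      intro z hz
      by_contra hzE
      exact hz (hd.analyticAt ((hEc.isOpen_compl).mem_nhds hzE))
    haveI : Nonempty C := hCne.to_subtype
    haveI := hCclosed.completeSpace_coe
    haveI := hcnt.to_subtype
    set g : E₁ → Set C := fun x => {z : C | (z : ℂ).re = (x : ℝ)} with hg
    have hgc : ∀ x, IsClosed (g x) := fun x =>
      IsClosed.preimage (Complex.continuous_re.comp continuous_subtype_val) isClosed_singleton
    have hgU : ⋃ x, g x = Set.univ := by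
      ext z
      simp only [Set.mem_iUnion, Set.mem_univ, iff_true]
      exact ⟨⟨(z : ℂ).re, (hCE z.2).1⟩, rfl⟩
    obtain ⟨x₀, z₀', hz₀'⟩ := nonempty_interior_of_iUnion_of_closed hgc hgU
    obtain ⟨ε, hεpos, hball⟩ := Metric.isOpen_iff.1 isOpen_interior z₀' hz₀'
    set z₀ : ℂ := (z₀' : ℂ) with hz₀def
    set δ : ℝ := ε / 4 with hδdef
    have hδpos : 0 < δ := by positivity
    have hz₀S : z₀ ∈ Set.Ioo (z₀.re - δ) (z₀.re + δ) ×ℂ Set.Ioo (z₀.im - δ) (z₀.im + δ) := by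
      rw [Complex.mem_reProdIm]
      constructor <;> constructor <;> simp <;> linarith
    have hAz₀ : AnalyticAt ℂ f z₀ := by
      apply analytic_off_line (x₀ := (x₀ : ℝ)) (hf.continuousOn) ?_ hz₀S
      intro z hz hzx
      rw [Complex.mem_reProdIm] at hz
      by_contra hnd
      have hzC : z ∈ C := by
        intro hAz
        exact hnd hAz.differentiableAt
      have hdist : dist z z₀ < ε := by
        have h1 : |z.re - z₀.re| < δ := by
          rw [abs_lt]; exact ⟨by linarith [hz.1.1], by linarith [hz.1.2]⟩
        have h2 : |z.im - z₀.im| < δ := by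
          rw [abs_lt]; exact ⟨by linarith [hz.2.1], by linarith [hz.2.2]⟩
        rw [Complex.dist_eq]
        calc ‖z - z₀‖ ≤ |(z - z₀).re| + |(z - z₀).im| :=
              Complex.norm_le_abs_re_add_abs_im _
          _ = |z.re - z₀.re| + |z.im - z₀.im| := by rw [Complex.sub_re, Complex.sub_im]
          _ < ε := by rw [hδdef] at h1 h2; linarith
      have hmem : (⟨z, hzC⟩ : C) ∈ Metric.ball z₀' ε := by
        rw [Metric.mem_ball, Subtype.dist_eq]
        exact hdist
      have := interior_subset (hball hmem)
      exact hzx this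
    exact z₀'.2 hAz₀
  have hdiff : Differentiable ℂ f := fun z => (hA z).differentiableAt
  intro z w
  rw [hdiff.apply_eq_of_tendsto_cocompact z hL, hdiff.apply_eq_of_tendsto_cocompact w hL]

end PartA

section PartB

open Complex Metric
open scoped Interval

/-- On an uncountable compact set of reals there is a nonatomic probability measure. -/
private lemma exists_good_measure {E₁ : Set ℝ} (h₁ : IsCompact E₁) (hunc : ¬E₁.Countable) :
    ∃ μ : Measure ℝ, IsProbabilityMeasure μ ∧ μ E₁ᶜ = 0 ∧ ∀ p : ℝ, μ {p} = 0 := by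
  haveI : PolishSpace E₁ := h₁.isClosed.polishSpace
  have hXunc : ¬Countable E₁ := by rwa [Set.countable_coe_iff]
  have hRunc : ¬Countable ℝ := by
    intro h
    exact hXunc inferInstance
  let e : E₁ ≃ᵐ ℝ := PolishSpace.measurableEquivOfNotCountable hXunc hRunc
  let ν₀ : Measure ℝ := volume.restrict (Set.Icc (0 : ℝ) 1)
  let ν : Measure E₁ := Measure.map e.symm ν₀
  refine ⟨Measure.map (Subtype.val : E₁ → ℝ) ν, ?_, ?_, ?_⟩
  · constructor
    rw [Measure.map_apply measurable_subtype_coe MeasurableSet.univ, Set.preimage_univ,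
      Measure.map_apply e.symm.measurable MeasurableSet.univ, Set.preimage_univ]
    simp [ν₀, Real.volume_Icc]
  · rw [Measure.map_apply measurable_subtype_coe h₁.isClosed.measurableSet.compl]
    have : (Subtype.val : E₁ → ℝ) ⁻¹' E₁ᶜ = ∅ := by
      ext x
      simp [x.2]
    rw [this]
    simp
  · intro p
    rw [Measure.map_apply measurable_subtype_coe (measurableSet_singleton p),
      Measure.map_apply e.symm.measurable
        (measurable_subtype_coe (measurableSet_singleton p))]
    apply Set.Subsingleton.measure_zero
    intro s hs t ht
    simp only [Set.mem_preimage, Set.mem_singleton_iff] at hs ht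
    exact e.symm.injective (Subtype.val_injective (hs.trans ht.symm))

end PartB

section PartB2

open Complex Metric

private noncomputable def Gtr (E₂ : Set ℝ) (w : ℂ) : ℂ := ∫ y in E₂, (w - y * Complex.I)⁻¹

private noncomputable def Htr (E₂ : Set ℝ) (w : ℂ) : ℂ := Complex.exp (-Gtr E₂ w) - 1

private lemma measurable_kernel (w : ℂ) : Measurable fun y : ℝ => (w - y * Complex.I)⁻¹ :=
  ((continuous_const.sub (Complex.continuous_ofReal.mul continuous_const)).measurable).inv

private lemma measurable_Gtr (E₂ : Set ℝ) : Measurable (Gtr E₂) := by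
  have h : StronglyMeasurable fun p : ℂ × ℝ => (p.1 - p.2 * Complex.I)⁻¹ :=
    Measurable.stronglyMeasurable
      (((continuous_fst.sub ((Complex.continuous_ofReal.comp continuous_snd).mul
        continuous_const)).measurable).inv)
  exact (h.integral_prod_right' (ν := volume.restrict E₂)).measurable

private lemma measurable_Htr (E₂ : Set ℝ) : Measurable (Htr E₂) := by
  apply Measurable.sub _ measurable_const
  exact Complex.measurable_exp.comp (measurable_Gtr E₂).neg

private lemma re_Gtr_le (E₂ : Set ℝ) (w : ℂ) : |(Gtr E₂ w).re| ≤ Real.pi := by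
  by_cases hInt : Integrable (fun y : ℝ => (w - y * Complex.I)⁻¹) (volume.restrict E₂)
  · have hre : (Gtr E₂ w).re = ∫ y in E₂, ((w - y * Complex.I)⁻¹).re := by
      rw [Gtr, ← RCLike.re_to_complex, ← integral_re hInt]
      simp only [RCLike.re_to_complex]
    by_cases ha : w.re = 0
    · rw [hre]
      have hz : ∀ y : ℝ, ((w - y * Complex.I)⁻¹).re = 0 := by
        intro y
        rw [Complex.inv_re]
        simp [Complex.sub_re, ha]
      simp only [hz, integral_zero, abs_zero]
      exact Real.pi_pos.le
    · set r : ℝ := |w.re| with hrdef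
      have hr : 0 < r := abs_pos.2 ha
      have hsq : 0 < w.re ^ 2 := by positivity
      set g : ℝ → ℝ := fun y => |w.re| / (w.re ^ 2 + (w.im - y) ^ 2) with hgdef
      have hden : ∀ y : ℝ, 0 < w.re ^ 2 + (w.im - y) ^ 2 := by
        intro y; nlinarith [sq_nonneg (w.im - y)]
      have hg_eq : ∀ y : ℝ, |((w - y * Complex.I)⁻¹).re| = g y := by
        intro y
        rw [Complex.inv_re, Complex.normSq_apply]
        have h1 : (w - y * Complex.I).re = w.re := by simp
        have h2 : (w - y * Complex.I).im = w.im - y := by simp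
        rw [h1, h2, abs_div]
        rw [hgdef]
        have h3 : w.re * w.re + (w.im - y) * (w.im - y) = w.re ^ 2 + (w.im - y) ^ 2 := by ring
        rw [h3, abs_of_pos (hden y)]
      have hg_cont : Continuous g := by
        apply continuous_const.div (by fun_prop)
        exact fun y => (hden y).ne'
      have hg_nonneg : ∀ y : ℝ, 0 ≤ g y := by
        intro y
        exact div_nonneg (abs_nonneg _) (hden y).le
      have hg_int : Integrable g volume := by
        have hCb : Integrable (fun y : ℝ => (|w.re| + |w.re|⁻¹) * (1 + (y - w.im) ^ 2)⁻¹)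
            volume := (integrable_inv_one_add_sq.comp_sub_right w.im).const_mul _
        apply hCb.mono' hg_cont.aestronglyMeasurable
        apply Filter.Eventually.of_forall
        intro y
        rw [Real.norm_eq_abs, _root_.abs_of_nonneg (hg_nonneg y)]
        show |w.re| / (w.re ^ 2 + (w.im - y) ^ 2) ≤ _
        have h4 : (0:ℝ) < 1 + (y - w.im) ^ 2 := by positivity
        rw [div_le_iff₀ (hden y)]
        have hA2 : |w.re| ^ 2 = w.re ^ 2 := _root_.sq_abs w.re
        have h6 : |w.re|⁻¹ * w.re ^ 2 = |w.re| := by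
          rw [← hA2, sq, inv_mul_cancel_left₀ hr.ne']
        have key : |w.re| * (1 + (y - w.im) ^ 2) ≤
            (|w.re| + |w.re|⁻¹) * (w.re ^ 2 + (w.im - y) ^ 2) := by
          have hsym : (w.im - y) ^ 2 = (y - w.im) ^ 2 := by ring
          rw [hsym]
          have p1 : 0 ≤ |w.re| * w.re ^ 2 := mul_nonneg (abs_nonneg _) (sq_nonneg _)
          have p2 : 0 ≤ |w.re|⁻¹ * (y - w.im) ^ 2 :=
            mul_nonneg (inv_pos.2 hr).le (sq_nonneg _)
          nlinarith [h6]
        calc |w.re| = (|w.re| * (1 + (y - w.im) ^ 2)) * (1 + (y - w.im) ^ 2)⁻¹ := by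
              field_simp
          _ ≤ ((|w.re| + |w.re|⁻¹) * (w.re ^ 2 + (w.im - y) ^ 2)) * (1 + (y - w.im) ^ 2)⁻¹ :=
              mul_le_mul_of_nonneg_right key (by positivity)
          _ = (|w.re| + |w.re|⁻¹) * (1 + (y - w.im) ^ 2)⁻¹ * (w.re ^ 2 + (w.im - y) ^ 2) := by
              ring
      have hval : ∫ y : ℝ, g y = Real.pi := by
        have hA2 : |w.re| ^ 2 = w.re ^ 2 := _root_.sq_abs w.re
        have hstep : ∀ y : ℝ, g y =
            (fun t : ℝ => |w.re|⁻¹ * (1 + (t * |w.re|⁻¹) ^ 2)⁻¹) (y - w.im) := by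
          intro y
          show |w.re| / (w.re ^ 2 + (w.im - y) ^ 2) =
            |w.re|⁻¹ * (1 + ((y - w.im) * |w.re|⁻¹) ^ 2)⁻¹
          have e : (1 + ((y - w.im) * |w.re|⁻¹) ^ 2) =
              (w.re ^ 2 + (w.im - y) ^ 2) / w.re ^ 2 := by
            rw [mul_pow, inv_pow, hA2]
            field_simp
            ring
          rw [e, inv_div, ← mul_div_assoc]
          congr 1
          rw [← hA2, sq, inv_mul_cancel_left₀ hr.ne']
        calc ∫ y : ℝ, g y
            = ∫ y : ℝ, (fun t : ℝ => |w.re|⁻¹ * (1 + (t * |w.re|⁻¹) ^ 2)⁻¹) (y - w.im) := by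
              congr 1; funext y; exact hstep y
          _ = ∫ t : ℝ, |w.re|⁻¹ * (1 + (t * |w.re|⁻¹) ^ 2)⁻¹ :=
              integral_sub_right_eq_self (μ := volume)
                (fun t : ℝ => |w.re|⁻¹ * (1 + (t * |w.re|⁻¹) ^ 2)⁻¹) w.im
          _ = |w.re|⁻¹ * ∫ t : ℝ, (1 + (t * |w.re|⁻¹) ^ 2)⁻¹ := integral_const_mul _ _
          _ = Real.pi := by
              rw [MeasureTheory.Measure.integral_comp_inv_mul_right
                (fun t : ℝ => (1 + t ^ 2)⁻¹) |w.re|]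
              rw [integral_univ_inv_one_add_sq, smul_eq_mul, _root_.abs_abs]
              field_simp
      calc |(Gtr E₂ w).re| = |∫ y in E₂, ((w - y * Complex.I)⁻¹).re| := by rw [hre]
        _ ≤ ∫ y in E₂, |((w - y * Complex.I)⁻¹).re| := by
            have h := MeasureTheory.norm_integral_le_integral_norm
              (μ := volume.restrict E₂) (fun y : ℝ => ((w - y * Complex.I)⁻¹).re)
            simpa only [Real.norm_eq_abs] using h
        _ = ∫ y in E₂, g y := by simp only [hg_eq]
        _ ≤ ∫ y : ℝ, g y :=
            setIntegral_le_integral hg_int (Filter.Eventually.of_forall hg_nonneg)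
        _ = Real.pi := hval
  · rw [Gtr, integral_undef hInt]
    simpa using Real.pi_pos.le

private lemma norm_exp_neg_Gtr_le (E₂ : Set ℝ) (w : ℂ) :
    ‖Complex.exp (-Gtr E₂ w)‖ ≤ Real.exp Real.pi := by
  rw [Complex.norm_exp]
  apply Real.exp_le_exp.2
  rw [Complex.neg_re]
  have h := abs_le.1 (re_Gtr_le E₂ w)
  linarith [h.1]

private lemma norm_Htr_le (E₂ : Set ℝ) (w : ℂ) : ‖Htr E₂ w‖ ≤ Real.exp Real.pi + 1 := by
  rw [Htr]
  calc ‖Complex.exp (-Gtr E₂ w) - 1‖ ≤ ‖Complex.exp (-Gtr E₂ w)‖ + ‖(1 : ℂ)‖ := norm_sub_le _ _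
    _ ≤ Real.exp Real.pi + 1 := by
        rw [norm_one]
        linarith [norm_exp_neg_Gtr_le E₂ w]

private lemma integrable_inv_E₂ {E₂ : Set ℝ} (hm : MeasurableSet E₂) (hfin : volume E₂ ≠ ⊤)
    {w : ℂ} {D : ℝ} (hD : 0 < D) (hw : ∀ y ∈ E₂, D ≤ ‖w - y * Complex.I‖) :
    Integrable (fun y : ℝ => (w - y * Complex.I)⁻¹) (volume.restrict E₂) := by
  haveI : IsFiniteMeasure (volume.restrict E₂) :=
    ⟨by rwa [Measure.restrict_apply_univ, lt_top_iff_ne_top]⟩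
  apply Integrable.mono' (integrable_const (D⁻¹)) (measurable_kernel w).aestronglyMeasurable
  filter_upwards [ae_restrict_mem hm] with y hy
  rw [norm_inv]
  exact inv_anti₀ hD (hw y hy)

private lemma norm_Gtr_le {E₂ : Set ℝ} (hfin : volume E₂ ≠ ⊤) {w : ℂ} {D : ℝ}
    (hD : 0 < D) (hw : ∀ y ∈ E₂, D ≤ ‖w - y * Complex.I‖) :
    ‖Gtr E₂ w‖ ≤ D⁻¹ * (volume E₂).toReal := by
  rw [Gtr]
  apply MeasureTheory.norm_setIntegral_le_of_norm_le_const (lt_top_iff_ne_top.2 hfin)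
  · intro y hy
    rw [norm_inv]
    exact inv_anti₀ hD (hw y hy)

end PartB2

section PartB3

open Complex Metric

private lemma hasDerivAt_Gtr {E₂ : Set ℝ} (hm : MeasurableSet E₂) (hfin : volume E₂ ≠ ⊤)
    {w : ℂ} {r : ℝ} (hr : 0 < r) (hw : ∀ y ∈ E₂, 2 * r ≤ ‖w - y * Complex.I‖) :
    HasDerivAt (Gtr E₂) (∫ y in E₂, -(((w - y * Complex.I)) ^ 2)⁻¹) w := by
  haveI : IsFiniteMeasure (volume.restrict E₂) :=
    ⟨by rwa [Measure.restrict_apply_univ, lt_top_iff_ne_top]⟩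
  have hlow : ∀ y ∈ E₂, ∀ w' ∈ Metric.ball w r, r ≤ ‖w' - y * Complex.I‖ := by
    intro y hy w' hw'
    have h1 := hw y hy
    have h2 : ‖w - w'‖ < r := by
      rw [← dist_eq_norm, dist_comm]
      exact hw'
    have h3 : ‖w - y * Complex.I‖ - ‖w - w'‖ ≤ ‖(w - y * Complex.I) - (w - w')‖ :=
      norm_sub_norm_le _ _
    have h4 : (w - y * Complex.I) - (w - w') = w' - y * Complex.I := by ring
    rw [h4] at h3
    linarith
  have key := hasDerivAt_integral_of_dominated_loc_of_deriv_le (F := fun w' (y : ℝ) =>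
      (w' - y * Complex.I)⁻¹) (F' := fun w' (y : ℝ) => -(((w' - y * Complex.I)) ^ 2)⁻¹)
      (μ := volume.restrict E₂) (x₀ := w) (bound := fun _ => (r ^ 2)⁻¹) (Metric.ball_mem_nhds w hr)
      ?_ ?_ ?_ ?_ ?_ ?_
  · exact key.2
  · exact Filter.Eventually.of_forall fun w' => (measurable_kernel w').aestronglyMeasurable
  · exact integrable_inv_E₂ hm hfin (by linarith) hw
  · apply Measurable.aestronglyMeasurable
    exact (((continuous_const.sub (Complex.continuous_ofReal.mul
      continuous_const)).measurable).pow_const 2).inv.neg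
  · filter_upwards [ae_restrict_mem hm] with y hy
    intro w' hw'
    rw [norm_neg, norm_inv, norm_pow]
    apply inv_anti₀ (by positivity)
    have := hlow y hy w' hw'
    nlinarith [norm_nonneg (w' - y * Complex.I)]
  · exact integrable_const _
  · filter_upwards [ae_restrict_mem hm] with y hy
    intro w' hw'
    have hne : w' - (y : ℂ) * Complex.I ≠ 0 := by
      intro h0
      have := hlow y hy w' hw'
      rw [h0, norm_zero] at this
      linarith
    have hd : HasDerivAt (fun u : ℂ => u - (y : ℂ) * Complex.I) 1 w' :=
      (hasDerivAt_id w').sub_const _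
    have := hd.inv hne
    refine this.congr_deriv ?_
    rw [neg_div, one_div]

private lemma hasDerivAt_Htr {E₂ : Set ℝ} (hm : MeasurableSet E₂) (hfin : volume E₂ ≠ ⊤)
    {w : ℂ} {r : ℝ} (hr : 0 < r) (hw : ∀ y ∈ E₂, 2 * r ≤ ‖w - y * Complex.I‖) :
    HasDerivAt (Htr E₂)
      ((∫ y in E₂, (((w - y * Complex.I)) ^ 2)⁻¹) * Complex.exp (-Gtr E₂ w)) w := by
  have h1 := hasDerivAt_Gtr hm hfin hr hw
  have h2 := ((h1.neg).cexp).sub_const 1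
  refine HasDerivAt.congr_deriv (f := Htr E₂) h2 ?_
  rw [integral_neg]
  simp only [Pi.neg_apply]
  ring

private lemma continuousAt_Htr {E₂ : Set ℝ} (hm : MeasurableSet E₂) (hfin : volume E₂ ≠ ⊤)
    {w : ℂ} (hw : w.re ≠ 0) : ContinuousAt (Htr E₂) w := by
  have hr : 0 < |w.re| / 2 := by positivity
  apply HasDerivAt.continuousAt (hasDerivAt_Htr hm hfin hr ?_)
  intro y hy
  have h1 : (w - y * Complex.I).re = w.re := by simp
  calc 2 * (|w.re| / 2) = |w.re| := by ring
    _ = |(w - y * Complex.I).re| := by rw [h1]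
    _ ≤ ‖w - y * Complex.I‖ := Complex.abs_re_le_norm _

end PartB3

section PartB4

open Complex Metric

set_option maxHeartbeats 1000000 in
private lemma not_removable {E₁ E₂ : Set ℝ} (h₁ : IsCompact E₁) (h₂ : IsCompact E₂)
    (hpos : 0 < volume E₂) (hunc : ¬E₁.Countable) :
    ¬ARemovable {z : ℂ | z.re ∈ E₁ ∧ z.im ∈ E₂} := by
  intro hrem
  obtain ⟨μ, hprob, hμE, hμatom⟩ := exists_good_measure h₁ hunc
  haveI := hprob
  set E : Set ℂ := {z : ℂ | z.re ∈ E₁ ∧ z.im ∈ E₂} with hEdef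
  have hm₂ : MeasurableSet E₂ := h₂.isClosed.measurableSet
  have hfin : volume E₂ ≠ ⊤ := h₂.measure_lt_top.ne
  haveI : IsFiniteMeasure (volume.restrict E₂) :=
    ⟨by rwa [Measure.restrict_apply_univ, lt_top_iff_ne_top]⟩
  set c : ℝ := (volume E₂).toReal with hcdef
  have hc : 0 < c := ENNReal.toReal_pos hpos.ne' hfin
  set B : ℝ := Real.exp Real.pi + 1 with hBdef
  have hB : 0 < B := by positivity
  have hE₁ne : E₁.Nonempty := by
    rcases E₁.eq_empty_or_nonempty with h | h
    · exact absurd (h ▸ Set.countable_empty) hunc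
    · exact h
  have hE₂ne : E₂.Nonempty := MeasureTheory.nonempty_of_measure_ne_zero hpos.ne'
  have hEne : E.Nonempty := by
    obtain ⟨x, hx⟩ := hE₁ne; obtain ⟨y, hy⟩ := hE₂ne
    refine ⟨(x : ℂ) + y * Complex.I, ?_, ?_⟩ <;> simp [hx, hy]
  have hEc : IsClosed E := IsClosed.inter (h₁.isClosed.preimage Complex.continuous_re)
      (h₂.isClosed.preimage Complex.continuous_im)
  obtain ⟨M₁, hM₁⟩ := isBounded_iff_forall_norm_le.1 h₁.isBounded
  obtain ⟨M₂, hM₂⟩ := isBounded_iff_forall_norm_le.1 h₂.isBounded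
  set M : ℝ := |M₁| + |M₂| with hMdef
  have hM0 : 0 ≤ M := by positivity
  have hMx : ∀ x ∈ E₁, |x| ≤ M := by
    intro x hx
    have := hM₁ x hx
    rw [Real.norm_eq_abs] at this
    have h1 := le_abs_self M₁
    have h2 := abs_nonneg M₂
    rw [hMdef]; linarith
  have hMy : ∀ y ∈ E₂, |y| ≤ M := by
    intro y hy
    have := hM₂ y hy
    rw [Real.norm_eq_abs] at this
    have h1 := le_abs_self M₂
    have h2 := abs_nonneg M₁
    rw [hMdef]; linarith
  have hae_E₁ : ∀ᵐ x ∂μ, x ∈ E₁ := by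
    rw [MeasureTheory.ae_iff]
    exact hμE
  have hxyI : ∀ x y : ℝ, |x| ≤ M → |y| ≤ M → ‖(x : ℂ) + y * Complex.I‖ ≤ 2 * M := by
    intro x y hx hy
    calc ‖(x:ℂ) + y * Complex.I‖
        ≤ |((x:ℂ) + y * Complex.I).re| + |((x:ℂ) + y * Complex.I).im| :=
          Complex.norm_le_abs_re_add_abs_im _
      _ ≤ 2 * M := by
          have h1 : ((x:ℂ) + y * Complex.I).re = x := by simp
          have h2 : ((x:ℂ) + y * Complex.I).im = y := by simp
          rw [h1, h2]; linarith
  set f : ℂ → ℂ := fun z => ∫ x, Htr E₂ (z - x) ∂μ with hfdef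
  have hmeasf : ∀ z : ℂ, AEStronglyMeasurable (fun x : ℝ => Htr E₂ (z - x)) μ := fun z =>
    ((measurable_Htr E₂).comp ((Complex.measurable_ofReal).const_sub z)).aestronglyMeasurable
  have hboundf : ∀ z : ℂ, ∀ x : ℝ, ‖Htr E₂ (z - x)‖ ≤ B := fun z x => norm_Htr_le E₂ _
  have hint : ∀ z : ℂ, Integrable (fun x : ℝ => Htr E₂ (z - x)) μ := fun z =>
    Integrable.mono' (integrable_const B) (hmeasf z)
      (Filter.Eventually.of_forall (hboundf z))
  -- continuity of f
  have hcont : Continuous f := by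
    rw [continuous_iff_continuousAt]
    intro z₀
    have hae_ne : ∀ᵐ x ∂μ, x ≠ z₀.re := by
      rw [MeasureTheory.ae_iff]
      have he : {x : ℝ | ¬x ≠ z₀.re} = {z₀.re} := by ext x; simp
      rw [he]; exact hμatom _
    have htend := MeasureTheory.tendsto_integral_filter_of_dominated_convergence
      (μ := μ) (F := fun (z : ℂ) (x : ℝ) => Htr E₂ (z - x)) (f := fun x : ℝ => Htr E₂ (z₀ - x))
      (l := nhds z₀) (fun _ => B)
      (Filter.Eventually.of_forall hmeasf)
      (Filter.Eventually.of_forall fun z => Filter.Eventually.of_forall (hboundf z))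
      (integrable_const B) ?_
    · exact htend
    · filter_upwards [hae_ne] with x hx
      have hre : (z₀ - (x : ℂ)).re ≠ 0 := by
        simp only [Complex.sub_re, Complex.ofReal_re, sub_ne_zero]
        exact fun h => hx h.symm
      have hcH : ContinuousAt (Htr E₂) (z₀ - x) := continuousAt_Htr hm₂ hfin hre
      have hsub : ContinuousAt (fun z : ℂ => z - (x : ℂ)) z₀ :=
        (continuous_id.sub continuous_const).continuousAt
      exact Filter.Tendsto.comp hcH hsub
  -- differentiability off E
  have hdiff : DifferentiableOn ℂ f Eᶜ := by
    intro z₀ hz₀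
    have hd0 : 0 < Metric.infDist z₀ E := (hEc.notMem_iff_infDist_pos hEne).1 hz₀
    set r : ℝ := Metric.infDist z₀ E / 2 with hrdef
    have hr : 0 < r := by positivity
    have hsep : ∀ x ∈ E₁, ∀ y ∈ E₂, ∀ z ∈ Metric.ball z₀ r, r ≤ ‖z - x - y * Complex.I‖ := by
      intro x hx y hy z hz
      have hmem : (x : ℂ) + y * Complex.I ∈ E := by
        refine ⟨?_, ?_⟩ <;> simp [hx, hy]
      have h1 : Metric.infDist z₀ E ≤ dist z₀ ((x : ℂ) + y * Complex.I) :=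
        Metric.infDist_le_dist_of_mem hmem
      have h2 : dist z z₀ < r := hz
      have h3 := dist_triangle z₀ z ((x : ℂ) + y * Complex.I)
      have h4 : dist z ((x : ℂ) + y * Complex.I) = ‖z - x - y * Complex.I‖ := by
        rw [dist_eq_norm]
        congr 1
        ring
      rw [dist_comm z₀ z] at h3
      rw [← h4]
      rw [hrdef] at h2 ⊢
      linarith
    have key := hasDerivAt_integral_of_dominated_loc_of_deriv_le
      (F := fun (z : ℂ) (x : ℝ) => Htr E₂ (z - x))
      (F' := fun (z : ℂ) (x : ℝ) => (∫ y in E₂, ((z - x - y * Complex.I) ^ 2)⁻¹) *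
        Complex.exp (-Gtr E₂ (z - x)))
      (μ := μ) (x₀ := z₀) (bound := fun _ => (r ^ 2)⁻¹ * c * Real.exp Real.pi) (Metric.ball_mem_nhds z₀ hr)
      (Filter.Eventually.of_forall hmeasf) (hint z₀) ?_ ?_ (integrable_const _) ?_
    · exact key.2.differentiableAt.differentiableWithinAt
    · -- measurability of F' z₀
      apply Measurable.aestronglyMeasurable
      apply Measurable.mul
      · have h : StronglyMeasurable fun p : ℝ × ℝ =>
            ((z₀ - p.1 - p.2 * Complex.I) ^ 2)⁻¹ := by
          apply Measurable.stronglyMeasurable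
          apply Measurable.inv
          apply Measurable.pow_const
          exact ((continuous_const.sub (Complex.continuous_ofReal.comp
            continuous_fst)).sub ((Complex.continuous_ofReal.comp continuous_snd).mul
            continuous_const)).measurable
        exact (h.integral_prod_right' (ν := volume.restrict E₂)).measurable
      · exact Complex.measurable_exp.comp (((measurable_Gtr E₂).comp
          ((Complex.measurable_ofReal).const_sub z₀)).neg)
    · -- bound
      filter_upwards [hae_E₁] with x hx
      intro z hz
      rw [norm_mul]
      have hb1 : ‖∫ y in E₂, ((z - x - y * Complex.I) ^ 2)⁻¹‖ ≤ (r ^ 2)⁻¹ * c := by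
        apply MeasureTheory.norm_setIntegral_le_of_norm_le_const (lt_top_iff_ne_top.2 hfin)
        · intro y hy
          rw [norm_inv, norm_pow]
          apply inv_anti₀ (by positivity)
          have := hsep x hx y hy z hz
          nlinarith [norm_nonneg (z - x - y * Complex.I)]
      have hb2 : ‖Complex.exp (-Gtr E₂ (z - x))‖ ≤ Real.exp Real.pi :=
        norm_exp_neg_Gtr_le E₂ _
      calc ‖∫ y in E₂, ((z - x - y * Complex.I) ^ 2)⁻¹‖ * ‖Complex.exp (-Gtr E₂ (z - x))‖
          ≤ ((r ^ 2)⁻¹ * c) * Real.exp Real.pi := by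
            apply mul_le_mul hb1 hb2 (norm_nonneg _) (by positivity)
        _ = (r ^ 2)⁻¹ * c * Real.exp Real.pi := by ring
    · -- differentiability
      filter_upwards [hae_E₁] with x hx
      intro z hz
      have hw : ∀ y ∈ E₂, 2 * (r / 2) ≤ ‖(z - x) - y * Complex.I‖ := by
        intro y hy
        have := hsep x hx y hy z hz
        calc 2 * (r / 2) = r := by ring
          _ ≤ ‖(z - x) - y * Complex.I‖ := by
              have he : (z - x) - (y : ℂ) * Complex.I = z - x - y * Complex.I := by ring
              rw [he]; exact this
      have houter := hasDerivAt_Htr hm₂ hfin (by positivity : (0:ℝ) < r / 2) hw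
      have hinner : HasDerivAt (fun u : ℂ => u - (x : ℂ)) 1 z := (hasDerivAt_id z).sub_const _
      have hcomp := HasDerivAt.comp z houter hinner
      have heq : ∀ y : ℝ, ((z - x) - (y : ℂ) * Complex.I) = z - x - y * Complex.I := fun y => by ring
      refine hcomp.congr_deriv ?_
      rw [mul_one]
  -- limit at infinity
  have htendf : Tendsto f (cocompact ℂ) (nhds 0) := by
    rw [Metric.tendsto_nhds]
    intro ε hε
    set R : ℝ := 2 * M + c + 1 + 4 * c / ε with hRdef
    have hcob := tendsto_norm_cocompact_atTop (E := ℂ)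
    filter_upwards [hcob.eventually_ge_atTop R] with z hz
    set D : ℝ := c + 1 + 4 * c / ε with hDdef
    have hDpos : 0 < D := by positivity
    have hD : ∀ x ∈ E₁, ∀ y ∈ E₂, D ≤ ‖z - x - y * Complex.I‖ := by
      intro x hx y hy
      have h1 : ‖(x : ℂ) + y * Complex.I‖ ≤ 2 * M := hxyI x y (hMx x hx) (hMy y hy)
      have h2 := norm_sub_norm_le z ((x : ℂ) + y * Complex.I)
      have h3 : z - ((x : ℂ) + y * Complex.I) = z - x - y * Complex.I := by ring
      rw [h3] at h2
      rw [hDdef]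
      rw [hRdef] at hz
      linarith
    have hpt : ∀ x ∈ E₁, ‖Htr E₂ (z - x)‖ ≤ 2 * (D⁻¹ * c) := by
      intro x hx
      have hG : ‖Gtr E₂ (z - x)‖ ≤ D⁻¹ * c := norm_Gtr_le hfin hDpos (hD x hx)
      have hG1 : ‖Gtr E₂ (z - x)‖ ≤ 1 := by
        apply le_trans hG
        rw [inv_mul_eq_div, div_le_one hDpos, hDdef]
        have h5 : 0 < 4 * c / ε := by positivity
        linarith
      have habs := Complex.norm_exp_sub_one_le (x := -Gtr E₂ (z - x)) (by
        simpa using hG1)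
      rw [Htr]
      calc ‖Complex.exp (-Gtr E₂ (z - x)) - 1‖
          ≤ 2 * ‖-Gtr E₂ (z - x)‖ := habs
        _ = 2 * ‖Gtr E₂ (z - x)‖ := by rw [norm_neg]
        _ ≤ 2 * (D⁻¹ * c) := by linarith
    have hfz : ‖f z‖ ≤ 2 * (D⁻¹ * c) := by
      calc ‖f z‖ ≤ (2 * (D⁻¹ * c)) * (μ Set.univ).toReal := by
            apply MeasureTheory.norm_integral_le_of_norm_le_const
            filter_upwards [hae_E₁] with x hx using hpt x hx
        _ = 2 * (D⁻¹ * c) := by simp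
    rw [dist_zero_right]
    have hfinal : 2 * (D⁻¹ * c) < ε := by
      rw [inv_mul_eq_div, ← mul_div_assoc, div_lt_iff₀ hDpos]
      rw [hDdef]
      have h5 : 0 < 4 * c / ε := by positivity
      have h6 : ε * (4 * c / ε) = 4 * c := by field_simp
      nlinarith [mul_pos hε hc]
    linarith
  -- apply removability
  have hconst := hrem f hcont hdiff ⟨0, htendf⟩
  have hzero : ∀ z : ℂ, f z = 0 := by
    intro z
    have h1 : Tendsto (fun _ : ℂ => f z) (cocompact ℂ) (nhds (f z)) := tendsto_const_nhds
    have h2 : Tendsto f (cocompact ℂ) (nhds (f z)) :=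
      Filter.Tendsto.congr (fun w => hconst z w) h1
    exact tendsto_nhds_unique h2 htendf
  -- contradiction at an explicit real point
  set t : ℝ := 4 * M + c + 1 with htdef
  have htM : (0:ℝ) < t - M := by rw [htdef]; linarith
  have htpos : (0:ℝ) < t := by rw [htdef]; linarith
  have hctM : c ≤ t - M := by rw [htdef]; linarith
  have hDx : ∀ x ∈ E₁, ∀ y ∈ E₂, t - M ≤ ‖(t : ℂ) - x - y * Complex.I‖ := by
    intro x hx y hy
    have hre : ((t : ℂ) - x - y * Complex.I).re = t - x := by simp
    have hxa := abs_le.1 (hMx x hx)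
    calc t - M ≤ t - x := by linarith [hxa.2]
      _ ≤ |((t : ℂ) - x - y * Complex.I).re| := by rw [hre]; exact le_abs_self _
      _ ≤ ‖(t : ℂ) - x - y * Complex.I‖ := Complex.abs_re_le_norm _
  have hptw : ∀ x ∈ E₁, ‖Htr E₂ ((t : ℂ) - x) + (c : ℂ) * (t : ℂ)⁻¹‖ ≤
      c ^ 2 / (t - M) ^ 2 + 2 * M * c / ((t - M) * t) := by
    intro x hx
    have hwv : ∀ y ∈ E₂, t - M ≤ ‖(t : ℂ) - x - y * Complex.I‖ := hDx x hx
    have hwv' : ∀ y ∈ E₂, t - M ≤ ‖((t : ℂ) - x) - y * Complex.I‖ := by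
      intro y hy
      have he : ((t : ℂ) - x) - (y : ℂ) * Complex.I = (t : ℂ) - x - y * Complex.I := by ring
      rw [he]; exact hwv y hy
    have hG : ‖Gtr E₂ ((t : ℂ) - x)‖ ≤ (t - M)⁻¹ * c := norm_Gtr_le hfin htM hwv'
    have hG1 : ‖Gtr E₂ ((t : ℂ) - x)‖ ≤ 1 := by
      apply le_trans hG
      rw [inv_mul_eq_div, div_le_one htM]
      exact hctM
    have e1 : ‖Htr E₂ ((t : ℂ) - x) + Gtr E₂ ((t : ℂ) - x)‖ ≤ c ^ 2 / (t - M) ^ 2 := by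
      have habs := Complex.norm_exp_sub_one_sub_id_le (x := -Gtr E₂ ((t : ℂ) - x)) (by
        simpa using hG1)
      have heq : Complex.exp (-Gtr E₂ ((t : ℂ) - x)) - 1 - (-Gtr E₂ ((t : ℂ) - x)) =
          Htr E₂ ((t : ℂ) - x) + Gtr E₂ ((t : ℂ) - x) := by rw [Htr]; ring
      rw [heq] at habs
      calc ‖Htr E₂ ((t : ℂ) - x) + Gtr E₂ ((t : ℂ) - x)‖
          ≤ ‖-Gtr E₂ ((t : ℂ) - x)‖ ^ 2 := habs
        _ = ‖Gtr E₂ ((t : ℂ) - x)‖ ^ 2 := by rw [norm_neg]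
        _ ≤ ((t - M)⁻¹ * c) ^ 2 := by
            apply pow_le_pow_left₀ (norm_nonneg _) hG
        _ = c ^ 2 / (t - M) ^ 2 := by
            rw [mul_pow, inv_pow, inv_mul_eq_div]
    have hsubint : Gtr E₂ ((t : ℂ) - x) - (c : ℂ) * (t : ℂ)⁻¹ =
        ∫ y in E₂, (((t : ℂ) - x - y * Complex.I)⁻¹ - (t : ℂ)⁻¹) := by
      rw [MeasureTheory.integral_sub (integrable_inv_E₂ hm₂ hfin htM hwv')
        (integrable_const _)]
      congr 1
      rw [MeasureTheory.setIntegral_const, Complex.real_smul, hcdef, Measure.real]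
    have e2 : ‖Gtr E₂ ((t : ℂ) - x) - (c : ℂ) * (t : ℂ)⁻¹‖ ≤ 2 * M / ((t - M) * t) * c := by
      rw [hsubint]
      apply MeasureTheory.norm_setIntegral_le_of_norm_le_const (lt_top_iff_ne_top.2 hfin)
      · intro y hy
        have hne1 : (t : ℂ) - x - y * Complex.I ≠ 0 := by
          intro h0
          have := hwv y hy
          rw [h0, norm_zero] at this
          linarith
        have hne2 : (t : ℂ) ≠ 0 := by
          simpa using htpos.ne'
        rw [inv_sub_inv hne1 hne2, norm_div, norm_mul]
        have hnum : (t : ℂ) - ((t : ℂ) - x - y * Complex.I) = (x : ℂ) + y * Complex.I := by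
          ring
        rw [hnum]
        have hb1 : ‖(x : ℂ) + y * Complex.I‖ ≤ 2 * M := hxyI x y (hMx x hx) (hMy y hy)
        have hb2 : (t - M) * t ≤ ‖(t : ℂ) - x - y * Complex.I‖ * ‖(t : ℂ)‖ := by
          have h7 : ‖(t : ℂ)‖ = t := by
            rw [Complex.norm_real, Real.norm_eq_abs, abs_of_pos htpos]
          rw [h7]
          apply mul_le_mul_of_nonneg_right (hwv y hy) htpos.le
        exact div_le_div₀ (by positivity) hb1 (by positivity) hb2
    calc ‖Htr E₂ ((t : ℂ) - x) + (c : ℂ) * (t : ℂ)⁻¹‖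
        = ‖(Htr E₂ ((t : ℂ) - x) + Gtr E₂ ((t : ℂ) - x)) -
            (Gtr E₂ ((t : ℂ) - x) - (c : ℂ) * (t : ℂ)⁻¹)‖ := by ring_nf
      _ ≤ ‖Htr E₂ ((t : ℂ) - x) + Gtr E₂ ((t : ℂ) - x)‖ +
            ‖Gtr E₂ ((t : ℂ) - x) - (c : ℂ) * (t : ℂ)⁻¹‖ := norm_sub_le _ _
      _ ≤ c ^ 2 / (t - M) ^ 2 + 2 * M * c / ((t - M) * t) := by
          have e2' : 2 * M / ((t - M) * t) * c = 2 * M * c / ((t - M) * t) := by ring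
          rw [e2'] at e2
          linarith
  have hFt : f ((t : ℝ) : ℂ) + (c : ℂ) * (t : ℂ)⁻¹ =
      ∫ x, (Htr E₂ ((t : ℂ) - x) + (c : ℂ) * (t : ℂ)⁻¹) ∂μ := by
    rw [MeasureTheory.integral_add (hint _) (integrable_const _),
      MeasureTheory.integral_const]
    simp
    rfl
  have hnormt : ‖f ((t : ℝ) : ℂ) + (c : ℂ) * (t : ℂ)⁻¹‖ ≤
      c ^ 2 / (t - M) ^ 2 + 2 * M * c / ((t - M) * t) := by
    rw [hFt]
    calc ‖∫ x, (Htr E₂ ((t : ℂ) - x) + (c : ℂ) * (t : ℂ)⁻¹) ∂μ‖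
        ≤ (c ^ 2 / (t - M) ^ 2 + 2 * M * c / ((t - M) * t)) * (μ Set.univ).toReal := by
          apply MeasureTheory.norm_integral_le_of_norm_le_const
          filter_upwards [hae_E₁] with x hx using hptw x hx
      _ = c ^ 2 / (t - M) ^ 2 + 2 * M * c / ((t - M) * t) := by simp
  rw [hzero ((t : ℝ) : ℂ), zero_add] at hnormt
  have hval : ‖(c : ℂ) * (t : ℂ)⁻¹‖ = c / t := by
    rw [norm_mul, norm_inv, Complex.norm_real, Complex.norm_real, Real.norm_eq_abs,
      Real.norm_eq_abs, abs_of_pos hc, abs_of_pos htpos, div_eq_mul_inv]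
  rw [hval] at hnormt
  have hkey : c ^ 2 * t + 2 * M * c * (t - M) < c * (t - M) ^ 2 := by
    nlinarith [sq_nonneg M, mul_pos hc htpos]
  have hfinal : c ^ 2 / (t - M) ^ 2 + 2 * M * c / ((t - M) * t) < c / t := by
    rw [div_add_div _ _ (by positivity) (by positivity), div_lt_div_iff₀ (by positivity) htpos]
    nlinarith [mul_lt_mul_of_pos_left hkey (mul_pos htM htpos), mul_pos htM htpos,
      mul_pos (mul_pos htM htM) htpos]
  linarith

end PartB4

/-- (Carleson) For compact sets `E₁, E₂ ⊆ ℝ` with `E₂` of positive Lebesgue measure, the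
product set `E₁ × E₂ ⊆ ℂ` is `A`-removable if and only if `E₁` is countable. -/
theorem stmt_12 (E₁ E₂ : Set ℝ) (h₁ : IsCompact E₁) (h₂ : IsCompact E₂)
    (hpos : 0 < volume E₂) :
    ARemovable {z : ℂ | ∃ x ∈ E₁, ∃ y ∈ E₂, z = x + y * Complex.I} ↔ E₁.Countable := by
  have hset : {z : ℂ | ∃ x ∈ E₁, ∃ y ∈ E₂, z = ↑x + ↑y * Complex.I} =
      {z : ℂ | z.re ∈ E₁ ∧ z.im ∈ E₂} := by
    ext z
    constructor
    · rintro ⟨x, hx, y, hy, rfl⟩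
      constructor <;> simp [hx, hy]
    · rintro ⟨h1, h2⟩
      exact ⟨z.re, h1, z.im, h2, (Complex.re_add_im z).symm⟩
  rw [hset]
  constructor
  · intro h
    by_contra hunc
    exact not_removable h₁ h₂ hpos hunc h
  · intro hcnt
    exact removable_of_countable h₁.isClosed h₂.isClosed hcnt
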